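/- arXiv:2506.00024 — 8 statements merged into one kernel-verified Lean document; each statement's English description precedes it below -/
import Mathlib

section
/- Let N be a subgyrogroup of a gyrogroup G. Then N is normal in G (i.e., a⊕(N⊕b) = (a⊕b)⊕N = (a⊕N)⊕b for all a,b ∈ G) if and only if both: (1) gyr[a,b](N) ⊆ N for all a,b ∈ G, and (2) ⊖(a⊕b) ⊕ ((N⊕a)⊕b) = N for all a,b ∈ G. -/
open Pointwise

/-- A gyrogroup: a groupoid with identity, inverses, gyroautomorphisms satisfying
the left gyroassociative law and the left loop property. -/
class Gyrogroup (G : Type*) extends Zero G, Neg G, Add G where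
  zero_add : ∀ a : G, 0 + a = a
  add_zero : ∀ a : G, a + 0 = a
  neg_add_cancel : ∀ a : G, -a + a = 0
  add_neg_cancel : ∀ a : G, a + -a = 0
  gyr : G → G → G → G
  gyr_bijective : ∀ a b : G, Function.Bijective (gyr a b)
  gyr_add : ∀ a b x y : G, gyr a b (x + y) = gyr a b x + gyr a b y
  gyrassoc : ∀ a b c : G, a + (b + c) = a + b + gyr a b c
  loop : ∀ a b : G, gyr (a + b) b = gyr a b

/-- A subgyrogroup: nonempty subset closed under ⊕ and ⊖, on which each gyr[a,b]
(a, b in the subset) restricts to an automorphism. -/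
structure Subgyrogroup (G : Type*) [Gyrogroup G] where
  carrier : Set G
  zero_mem : (0 : G) ∈ carrier
  add_mem : ∀ ⦃a b : G⦄, a ∈ carrier → b ∈ carrier → a + b ∈ carrier
  neg_mem : ∀ ⦃a : G⦄, a ∈ carrier → -a ∈ carrier
  gyr_image : ∀ ⦃a b : G⦄, a ∈ carrier → b ∈ carrier →
    Gyrogroup.gyr a b '' carrier = carrier

namespace GyroAux

open Gyrogroup

variable {G : Type*} [Gyrogroup G]

lemma left_cancel {a x y : G} (h : a + x = a + y) : x = y := by
  have key : ∀ z : G, -a + (a + z) = gyr (-a) a z := by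
    intro z
    rw [Gyrogroup.gyrassoc, Gyrogroup.neg_add_cancel, Gyrogroup.zero_add]
  have h1 := key x
  rw [h, key y] at h1
  exact ((Gyrogroup.gyr_bijective (-a) a).1 h1).symm

lemma gyr_zero_left (b c : G) : gyr (0 : G) b c = c := by
  have h := Gyrogroup.gyrassoc (0 : G) b c
  rw [Gyrogroup.zero_add, Gyrogroup.zero_add] at h
  exact (left_cancel h).symm

lemma gyr_neg_self (a c : G) : gyr (-a) a c = c := by
  have h := Gyrogroup.loop (-a) a
  rw [Gyrogroup.neg_add_cancel] at h
  rw [← h]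
  exact gyr_zero_left a c

lemma gyr_self_neg (a c : G) : gyr a (-a) c = c := by
  have h := Gyrogroup.loop a (-a)
  rw [Gyrogroup.add_neg_cancel] at h
  rw [← h]
  exact gyr_zero_left (-a) c

lemma lc1 (a x : G) : -a + (a + x) = x := by
  rw [Gyrogroup.gyrassoc, Gyrogroup.neg_add_cancel, Gyrogroup.zero_add, gyr_neg_self]

lemma lc2 (a x : G) : a + (-a + x) = x := by
  rw [Gyrogroup.gyrassoc, Gyrogroup.add_neg_cancel, Gyrogroup.zero_add, gyr_self_neg]

lemma gyrator (a b x : G) : gyr a b x = -(a + b) + (a + (b + x)) := by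
  conv_rhs => rw [Gyrogroup.gyrassoc a b x]
  rw [lc1]

lemma K0 (a b : G) : (a + b) + gyr a b (-b) = a := by
  rw [← Gyrogroup.gyrassoc, Gyrogroup.add_neg_cancel, Gyrogroup.add_zero]

lemma K1 (a b x : G) : gyr (a + b) (gyr a b (-b)) (gyr a b x) = x := by
  apply left_cancel (a := a)
  calc a + gyr (a + b) (gyr a b (-b)) (gyr a b x)
      = ((a + b) + gyr a b (-b)) + gyr (a + b) (gyr a b (-b)) (gyr a b x) := by rw [K0]
    _ = (a + b) + (gyr a b (-b) + gyr a b x) := (Gyrogroup.gyrassoc _ _ _).symm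
    _ = (a + b) + gyr a b (-b + x) := by rw [Gyrogroup.gyr_add]
    _ = a + (b + (-b + x)) := (Gyrogroup.gyrassoc _ _ _).symm
    _ = a + x := by rw [lc2]

lemma gyr_right_inv (a b x : G) : gyr a b (gyr (a + b) (gyr a b (-b)) x) = x := by
  obtain ⟨y, rfl⟩ := (Gyrogroup.gyr_bijective a b).2 x
  rw [K1]

lemma set_zero_add (S : Set G) : ({(0 : G)} : Set G) + S = S := by
  rw [Set.singleton_add]
  have h : ((0 : G) + ·) = id := funext fun x => Gyrogroup.zero_add x
  rw [h, Set.image_id]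

lemma set_add_zero (S : Set G) : S + ({(0 : G)} : Set G) = S := by
  rw [Set.add_singleton]
  have h : (· + (0 : G)) = (id : G → G) := funext fun x => Gyrogroup.add_zero x
  rw [h, Set.image_id]

lemma neg_cancel_set (c : G) (S : Set G) :
    ({-c} : Set G) + (({c} : Set G) + S) = S := by
  rw [Set.singleton_add, Set.singleton_add, ← Set.image_comp]
  have h : ((-c + ·) ∘ (c + ·)) = (id : G → G) := funext fun x => lc1 c x
  rw [h, Set.image_id]

lemma cancel_neg_set (c : G) (S : Set G) :
    ({c} : Set G) + (({-c} : Set G) + S) = S := by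
  rw [Set.singleton_add, Set.singleton_add, ← Set.image_comp]
  have h : ((c + ·) ∘ (-c + ·)) = (id : G → G) := funext fun x => lc2 c x
  rw [h, Set.image_id]

end GyroAux

open Gyrogroup GyroAux in
/-- N is normal in G (a⊕(N⊕b) = (a⊕b)⊕N = (a⊕N)⊕b for all a,b) iff
gyr[a,b](N) ⊆ N for all a,b and ⊖(a⊕b)⊕((N⊕a)⊕b) = N for all a,b. -/
theorem subgyrogroup_normal_iff {G : Type*} [Gyrogroup G] (N : Subgyrogroup G) :
    (∀ a b : G, {a} + (N.carrier + {b}) = {a + b} + N.carrier ∧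
        {a + b} + N.carrier = ({a} + N.carrier) + {b}) ↔
      ((∀ a b : G, Gyrogroup.gyr a b '' N.carrier ⊆ N.carrier) ∧
        (∀ a b : G, {-(a + b)} + ((N.carrier + {a}) + {b}) = N.carrier)) := by
  constructor
  · intro H
    have comm : ∀ b : G, N.carrier + {b} = {b} + N.carrier := by
      intro b
      have h := (H 0 b).1
      rwa [set_zero_add, Gyrogroup.zero_add] at h
    constructor
    · intro a b x hx
      obtain ⟨n, hn, rfl⟩ := hx
      have h1 : a + (b + n) ∈ {a + b} + N.carrier := by
        rw [← (H a b).1, comm b]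
        exact Set.add_mem_add rfl (Set.add_mem_add rfl hn)
      rw [Set.mem_add] at h1
      obtain ⟨c, hc, n', hn', he⟩ := h1
      rw [Set.mem_singleton_iff] at hc
      subst hc
      have : gyr a b n = n' := by
        rw [gyrator, ← he, lc1]
      rw [this]
      exact hn'
    · intro a b
      rw [comm a, ← (H a b).2, neg_cancel_set]
  · rintro ⟨h1, h2⟩
    have E : ∀ a b : G, (N.carrier + {a}) + {b} = {a + b} + N.carrier := by
      intro a b
      calc (N.carrier + {a}) + {b}
          = {a + b} + ({-(a + b)} + ((N.carrier + {a}) + {b})) :=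
            (cancel_neg_set (a + b) _).symm
        _ = {a + b} + N.carrier := by rw [h2 a b]
    have comm : ∀ a : G, N.carrier + {a} = {a} + N.carrier := by
      intro a
      have h := E a 0
      rwa [set_add_zero, Gyrogroup.add_zero] at h
    intro a b
    constructor
    · apply Set.Subset.antisymm
      · intro x hx
        rw [comm b] at hx
        rw [Set.mem_add] at hx
        obtain ⟨a', ha', y, hy, rfl⟩ := hx
        rw [Set.mem_singleton_iff] at ha'
        subst ha'
        rw [Set.mem_add] at hy
        obtain ⟨b', hb', n, hn, rfl⟩ := hy
        rw [Set.mem_singleton_iff] at hb'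
        subst hb'
        rw [Gyrogroup.gyrassoc]
        exact Set.add_mem_add rfl (h1 _ _ ⟨n, hn, rfl⟩)
      · intro x hx
        rw [Set.mem_add] at hx
        obtain ⟨c, hc, n, hn, rfl⟩ := hx
        rw [Set.mem_singleton_iff] at hc
        subst hc
        have hn1 : gyr (a + b) (gyr a b (-b)) n ∈ N.carrier :=
          h1 _ _ ⟨n, hn, rfl⟩
        have key : (a + b) + n = a + (b + gyr (a + b) (gyr a b (-b)) n) := by
          conv_lhs => rw [← gyr_right_inv a b n]
          rw [← Gyrogroup.gyrassoc]
        rw [key]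
        have hbm : b + gyr (a + b) (gyr a b (-b)) n ∈ N.carrier + {b} := by
          rw [comm b]
          exact Set.add_mem_add rfl hn1
        exact Set.add_mem_add rfl hbm
    · rw [← comm a, E a b]
end

section
/- Every first-countable Hausdorff paratopological gyrogroup G satisfies Hs(G) ≤ ω. -/
open Pointwise

/-- The right cosubtraction a ⊟ b = a ⊕ gyr[a,b](⊖b). -/
def boxminus {G : Type*} [Gyrogroup G] (a b : G) : G := a + Gyrogroup.gyr a b (-b)

/-- The Hausdorff number: the minimum cardinal κ such that every neighborhood U of 0
admits a family γ of neighborhoods of 0 with |γ| ≤ κ and ⋂_{V∈γ}(V ⊟ V) ⊆ U. -/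
noncomputable def Hs (G : Type*) [Gyrogroup G] [TopologicalSpace G] : Cardinal :=
  sInf {κ : Cardinal | ∀ U ∈ nhds (0 : G), ∃ γ : Set (Set G),
    (∀ V ∈ γ, V ∈ nhds (0 : G)) ∧ Cardinal.mk γ ≤ κ ∧
      (⋂ V ∈ γ, Set.image2 boxminus V V) ⊆ U}

section Aux

namespace Gyrogroup

variable {G : Type*} [Gyrogroup G]

lemma gyr_inj (a b : G) {x y : G} (h : gyr a b x = gyr a b y) : x = y :=
  (gyr_bijective a b).1 h

lemma add_left_cancel'' (a : G) {x y : G} (h : a + x = a + y) : x = y := by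
  have h2 : -a + a + gyr (-a) a x = -a + a + gyr (-a) a y := by
    rw [← gyrassoc, ← gyrassoc, h]
  rw [neg_add_cancel, zero_add, zero_add] at h2
  exact gyr_inj _ _ h2

lemma gyr_zero' (a b : G) : gyr a b (0:G) = 0 := by
  have h : gyr a b ((0:G)+0) = gyr a b 0 + gyr a b 0 := gyr_add a b 0 0
  rw [zero_add] at h
  refine (add_left_cancel'' (gyr a b 0) (x := (0:G)) (y := gyr a b 0) ?_).symm
  rw [add_zero]; exact h

lemma gyr_zero_left' (b c : G) : gyr (0:G) b c = c := by
  have h : (0:G) + (b + c) = 0 + b + gyr 0 b c := gyrassoc 0 b c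
  rw [zero_add, zero_add] at h
  exact (add_left_cancel'' b h).symm

lemma gyr_neg_self' (a c : G) : gyr a (-a) c = c := by
  have h := loop a (-a)
  rw [add_neg_cancel] at h
  rw [← h]; exact gyr_zero_left' _ _

lemma add_neg_cancel_left' (a b : G) : a + (-a + b) = b := by
  rw [gyrassoc, add_neg_cancel, zero_add, gyr_neg_self']

lemma neg_neg'' (a : G) : -(-a) = a :=
  add_left_cancel'' (-a) (by rw [add_neg_cancel, neg_add_cancel])

lemma add_boxminus (a b : G) : boxminus (a + b) b = a := by
  unfold boxminus
  rw [loop, ← gyrassoc, add_neg_cancel, add_zero]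

lemma gyr_nested (a b y : G) : gyr a (gyr a b (-b)) (gyr a b y) = y := by
  have hu : a + b + gyr a b (-b) = a := by
    have h := add_boxminus a b
    unfold boxminus at h
    rw [loop] at h
    exact h
  have hg : gyr a (gyr a b (-b)) = gyr (a + b) (gyr a b (-b)) := by
    have h := loop (a + b) (gyr a b (-b))
    rw [hu] at h
    exact h
  refine add_left_cancel'' a ?_
  calc a + gyr a (gyr a b (-b)) (gyr a b y)
      = a + b + gyr a b (-b) + gyr (a + b) (gyr a b (-b)) (gyr a b y) := by
        rw [hu, hg]
    _ = a + b + (gyr a b (-b) + gyr a b y) := (gyrassoc (a+b) _ _).symm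
    _ = a + b + gyr a b (-b + y) := by rw [gyr_add]
    _ = a + (b + (-b + y)) := (gyrassoc a b _).symm
    _ = a + y := by rw [add_neg_cancel_left']

lemma boxminus_add_cancel (a b : G) : boxminus a b + b = a := by
  have h := gyr_nested a b b
  calc boxminus a b + b
      = a + gyr a b (-b) + gyr a (gyr a b (-b)) (gyr a b b) := by
        rw [h]; rfl
    _ = a + (gyr a b (-b) + gyr a b b) := (gyrassoc a _ _).symm
    _ = a + gyr a b (-b + b) := by rw [gyr_add]
    _ = a := by rw [neg_add_cancel, gyr_zero', add_zero]

end Gyrogroup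

end Aux

/-- Every first-countable Hausdorff paratopological gyrogroup satisfies Hs(G) ≤ ω. -/
theorem Hs_le_aleph0_of_firstCountable {G : Type*} [Gyrogroup G] [TopologicalSpace G]
    [ContinuousAdd G] [T2Space G] [FirstCountableTopology G] :
    Hs G ≤ Cardinal.aleph0 := by
  refine csInf_le' ?_
  intro U hU
  obtain ⟨V, hV⟩ := (nhds (0:G)).exists_antitone_basis
  refine ⟨Set.range V, ?_, ?_, ?_⟩
  · rintro W ⟨n, rfl⟩
    exact hV.toHasBasis.mem_of_mem trivial
  · exact (Set.countable_range V).le_aleph0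
  · intro x hx
    by_cases hx0 : x = 0
    · subst hx0; exact mem_of_mem_nhds hU
    · exfalso
      obtain ⟨W₁, W₂, hW₁, hW₂, hxW₁, h0W₂, hd⟩ := t2_separation hx0
      have hcont : {y : G | x + y ∈ W₁} ∈ nhds (0:G) := by
        have hc : Continuous fun y : G => x + y := continuous_const.add continuous_id
        have ht := hc.continuousAt (x := (0:G))
        have hmem : W₁ ∈ nhds (x + 0) := by
          rw [Gyrogroup.add_zero]; exact hW₁.mem_nhds hxW₁
        exact ht hmem
      have hV0 : W₂ ∩ {y : G | x + y ∈ W₁} ∈ nhds (0:G) :=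
        Filter.inter_mem (hW₂.mem_nhds h0W₂) hcont
      obtain ⟨n, -, hn⟩ := hV.toHasBasis.mem_iff.mp hV0
      have hxn : x ∈ Set.image2 boxminus (V n) (V n) :=
        Set.mem_iInter₂.mp hx (V n) ⟨n, rfl⟩
      obtain ⟨a, ha, b, hb, hab⟩ := hxn
      have ha' : x + b = a := by rw [← hab, Gyrogroup.boxminus_add_cancel]
      have haV0 := hn ha
      have hbV0 := hn hb
      have haW₁ : a ∈ W₁ := by rw [← ha']; exact hbV0.2
      exact Set.disjoint_left.mp hd haW₁ haV0.1
end

section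
/- For every Hausdorff paratopological gyrogroup G, the Hausdorff number satisfies Hs(G) ≤ l(G), where l(G) is the Lindelöf number of G. -/
open Pointwise

namespace GGAux

variable {G : Type*} [Gyrogroup G]

lemma gg_cancel {a x y : G} (h : a + x = a + y) : x = y := by
  have h1 : ∀ z : G, -a + (a + z) = Gyrogroup.gyr (-a) a z := fun z => by
    rw [Gyrogroup.gyrassoc, Gyrogroup.neg_add_cancel, Gyrogroup.zero_add]
  exact (Gyrogroup.gyr_bijective (-a) a).injective (by rw [← h1, ← h1, h])

lemma gyr_zero_left (b x : G) : Gyrogroup.gyr (0:G) b x = x := by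
  have h := Gyrogroup.gyrassoc (0:G) b x
  rw [Gyrogroup.zero_add, Gyrogroup.zero_add] at h
  exact (gg_cancel h).symm

lemma gyr_neg_self (a x : G) : Gyrogroup.gyr (-a) a x = x := by
  have h := Gyrogroup.loop (-a) a
  rw [Gyrogroup.neg_add_cancel] at h
  rw [← h, gyr_zero_left]

lemma neg_add_cancel_left (a x : G) : -a + (a + x) = x := by
  rw [Gyrogroup.gyrassoc, Gyrogroup.neg_add_cancel, Gyrogroup.zero_add, gyr_neg_self]

lemma gg_neg_neg (a : G) : -(-a) = a :=
  gg_cancel (show -a + -(-a) = -a + a by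
    rw [Gyrogroup.add_neg_cancel, Gyrogroup.neg_add_cancel])

lemma add_neg_cancel_left (a x : G) : a + (-a + x) = x := by
  have h := neg_add_cancel_left (-a) x
  rwa [gg_neg_neg] at h

lemma gg_eq_neg {p q : G} (h : p + q = 0) : q = -p := by
  have h2 := neg_add_cancel_left p q
  rw [h, Gyrogroup.add_zero] at h2
  exact h2.symm

lemma gyrator (a b x : G) : Gyrogroup.gyr a b x = -(a+b) + (a + (b + x)) := by
  rw [Gyrogroup.gyrassoc a b x, neg_add_cancel_left]

lemma gg13 (p q r : G) : -(p+q) + (p + r) = Gyrogroup.gyr p q (-q + r) := by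
  have h : p + r = (p + q) + Gyrogroup.gyr p q (-q + r) := by
    rw [← Gyrogroup.gyrassoc, add_neg_cancel_left]
  rw [h, neg_add_cancel_left]

lemma gyr_zero_right (a b : G) : Gyrogroup.gyr a b (0:G) = 0 := by
  have h : Gyrogroup.gyr a b (0:G) + 0 = Gyrogroup.gyr a b 0 + Gyrogroup.gyr a b 0 := by
    rw [Gyrogroup.add_zero, ← Gyrogroup.gyr_add, Gyrogroup.zero_add]
  exact (gg_cancel h).symm

lemma gyr_neg (a b x : G) : Gyrogroup.gyr a b (-x) = -(Gyrogroup.gyr a b x) := by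
  apply gg_eq_neg
  rw [← Gyrogroup.gyr_add, Gyrogroup.add_neg_cancel, gyr_zero_right]

lemma gyr_inv_16 (a b x : G) :
    Gyrogroup.gyr b (a+b) (Gyrogroup.gyr a b x) = x := by
  have hb : -a + (a+b) = b := neg_add_cancel_left a b
  have hloop := Gyrogroup.loop (-a) (a+b)
  rw [hb] at hloop
  rw [hloop, gyrator (-a) (a+b), ← Gyrogroup.gyrassoc a b x, hb,
    neg_add_cancel_left, neg_add_cancel_left]

lemma gg18 (a b z : G) :
    Gyrogroup.gyr (b+a) (Gyrogroup.gyr b a b) (Gyrogroup.gyr b a z) = z := by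
  have h1 : Gyrogroup.gyr (b+a) (Gyrogroup.gyr b a b) (Gyrogroup.gyr b a z)
      = -(b+(a+b)) + (b + (a + (b+z))) := by
    rw [gyrator, ← Gyrogroup.gyr_add, ← Gyrogroup.gyrassoc b a b,
      ← Gyrogroup.gyrassoc b a (b+z)]
  have h2 : Gyrogroup.gyr b (a+b) (Gyrogroup.gyr a b z)
      = -(b+(a+b)) + (b + (a + (b+z))) := by
    rw [gyrator, ← Gyrogroup.gyrassoc a b z]
  rw [h1, ← h2, gyr_inv_16]

lemma gg_right_cancel (a b : G) : boxminus a b + b = a := by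
  have hgyr : Gyrogroup.gyr a b (-b) = -(a+b) + a := by
    rw [gyrator, Gyrogroup.add_neg_cancel, Gyrogroup.add_zero]
  have hbm : boxminus a b
      = (a + -(a+b)) + Gyrogroup.gyr a (-(a+b)) a := by
    rw [boxminus, hgyr, Gyrogroup.gyrassoc]
  have ha : (a + -(a+b)) + Gyrogroup.gyr a (-(a+b)) (a+b) = a := by
    rw [← Gyrogroup.gyrassoc, Gyrogroup.neg_add_cancel, Gyrogroup.add_zero]
  have key : -((a + -(a+b)) + Gyrogroup.gyr a (-(a+b)) a) + a = -a + (a+b) := by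
    have h13 := gg13 (a + -(a+b)) (Gyrogroup.gyr a (-(a+b)) a)
      (Gyrogroup.gyr a (-(a+b)) (a+b))
    rw [ha, ← gyr_neg, ← Gyrogroup.gyr_add] at h13
    rw [h13, gg18 (-(a+b)) a (-a + (a+b))]
  calc boxminus a b + b
      = ((a + -(a+b)) + Gyrogroup.gyr a (-(a+b)) a) + (-a + (a+b)) := by
        rw [hbm, neg_add_cancel_left]
    _ = a := by rw [← key, add_neg_cancel_left]

end GGAux

namespace GGAux

variable {G : Type*} [Gyrogroup G] [TopologicalSpace G] [ContinuousAdd G]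

lemma translate_open {x : G} {V : Set G} (hV : IsOpen V) :
    IsOpen ((fun y => x + y) '' V) := by
  have himg : (fun y => x + y) '' V = (fun y => -x + y) ⁻¹' V := by
    ext y
    constructor
    · rintro ⟨v, hv, rfl⟩
      simpa [Set.mem_preimage, neg_add_cancel_left] using hv
    · intro hy
      exact ⟨-x + y, hy, add_neg_cancel_left x y⟩
  rw [himg]
  exact hV.preimage (continuous_const.add continuous_id)

lemma sep_lemma [T2Space G] {x : G} (hx : x ≠ 0) :
    ∃ V : Set G, IsOpen V ∧ (0:G) ∈ V ∧
      ∀ a ∈ V, ∀ b ∈ V, ∀ c ∈ V, boxminus a b ≠ x + c := by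
  obtain ⟨u, v, hu, hv, hxu, h0v, huv⟩ := t2_separation hx
  have hcont : Continuous (fun p : G × G => (x + p.1) + p.2) :=
    (continuous_const.add continuous_fst).add continuous_snd
  have hpre : IsOpen ((fun p : G × G => (x + p.1) + p.2) ⁻¹' u) := hu.preimage hcont
  have h00 : ((0:G), (0:G)) ∈ (fun p : G × G => (x + p.1) + p.2) ⁻¹' u := by
    simp only [Set.mem_preimage, Gyrogroup.add_zero]
    exact hxu
  obtain ⟨W1, W2, hW1, hW2, h01, h02, hsub⟩ := isOpen_prod_iff.mp hpre 0 0 h00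
  refine ⟨v ∩ (W1 ∩ W2), hv.inter (hW1.inter hW2), ⟨h0v, h01, h02⟩, ?_⟩
  rintro a ha b hb c hc heq
  have hmem : (x + c) + b ∈ u := hsub (Set.mk_mem_prod hc.2.1 hb.2.2)
  have haeq : a = (x + c) + b := by rw [← heq, gg_right_cancel]
  exact Set.disjoint_left.mp huv (haeq ▸ hmem) ha.1

end GGAux

/-- The Lindelöf number of a space: the least infinite cardinal κ such that every open
cover has a subcover of cardinality at most κ. -/
noncomputable def LindelofNumber (X : Type*) [TopologicalSpace X] : Cardinal :=
  sInf {κ : Cardinal | Cardinal.aleph0 ≤ κ ∧ ∀ C : Set (Set X), (∀ U ∈ C, IsOpen U) →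
    ⋃₀ C = Set.univ → ∃ D ⊆ C, Cardinal.mk D ≤ κ ∧ ⋃₀ D = Set.univ}

/-- For every Hausdorff paratopological gyrogroup G, Hs(G) ≤ l(G). -/
theorem Hs_le_lindelofNumber {G : Type*} [Gyrogroup G] [TopologicalSpace G]
    [ContinuousAdd G] [T2Space G] : Hs G ≤ LindelofNumber G := by
  classical
  have hSLne : {κ : Cardinal | Cardinal.aleph0 ≤ κ ∧ ∀ C : Set (Set G), (∀ U ∈ C, IsOpen U) →
      ⋃₀ C = Set.univ → ∃ D ⊆ C, Cardinal.mk D ≤ κ ∧ ⋃₀ D = Set.univ}.Nonempty := by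
    refine ⟨max Cardinal.aleph0 (Cardinal.mk (Set G)), le_max_left _ _, ?_⟩
    intro C _ hC
    exact ⟨C, subset_rfl, le_trans (Cardinal.mk_set_le C) (le_max_right _ _), hC⟩
  have hmem := csInf_mem hSLne
  rw [show sInf _ = LindelofNumber G from rfl] at hmem
  obtain ⟨-, hLin⟩ := hmem
  apply csInf_le'
  intro U hU
  have h0int : (0:G) ∈ interior U := mem_interior_iff_mem_nhds.mpr hU
  -- choose separating neighborhoods
  have hsep : ∀ x : {x : G // x ∉ interior U}, ∃ V : Set G, IsOpen V ∧ (0:G) ∈ V ∧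
      ∀ a ∈ V, ∀ b ∈ V, ∀ c ∈ V, boxminus a b ≠ x.1 + c := by
    intro x
    exact GGAux.sep_lemma (fun h => x.2 (h ▸ h0int))
  choose Vf hVopen hV0 hVsep using hsep
  set t : {x : G // x ∉ interior U} → Set G := fun x => (fun y => x.1 + y) '' Vf x with ht
  set C : Set (Set G) := insert (interior U) (Set.range t) with hCdef
  have hCopen : ∀ O ∈ C, IsOpen O := by
    rintro O (rfl | ⟨x, rfl⟩)
    · exact isOpen_interior
    · exact GGAux.translate_open (hVopen x)
  have hCcov : ⋃₀ C = Set.univ := by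
    apply Set.eq_univ_of_forall
    intro y
    by_cases hy : y ∈ interior U
    · exact ⟨interior U, Set.mem_insert _ _, hy⟩
    · exact ⟨t ⟨y, hy⟩, Set.mem_insert_of_mem _ (Set.mem_range_self _),
        ⟨0, hV0 _, Gyrogroup.add_zero y⟩⟩
  obtain ⟨D, hDC, hDκ, hDcov⟩ := hLin C hCopen hCcov
  refine ⟨(fun d => if h : ∃ x, t x = d then Vf h.choose else (∅:Set G)) ''
      {d ∈ D | ∃ x, t x = d}, ?_, ?_, ?_⟩
  · rintro V ⟨d, ⟨-, hex⟩, rfl⟩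
    simp only
    rw [dif_pos hex]
    exact (hVopen _).mem_nhds (hV0 _)
  · calc Cardinal.mk _ ≤ Cardinal.mk {d ∈ D | ∃ x, t x = d} := Cardinal.mk_image_le
      _ ≤ Cardinal.mk D := Cardinal.mk_le_mk_of_subset (Set.sep_subset _ _)
      _ ≤ LindelofNumber G := hDκ
  · intro z hz
    by_contra hzU
    have hzD : z ∈ ⋃₀ D := hDcov ▸ Set.mem_univ z
    obtain ⟨O, hOD, hzO⟩ := hzD
    by_cases hex : ∃ x, t x = O
    · set x0 := hex.choose with hx0def
      have hx0 : t x0 = O := hex.choose_spec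
      have hγ : Vf x0 ∈ (fun d => if h : ∃ x, t x = d then Vf h.choose else (∅:Set G)) ''
          {d ∈ D | ∃ x, t x = d} := ⟨O, ⟨hOD, hex⟩, by simp only; rw [dif_pos hex]⟩
      have hz2 : z ∈ Set.image2 boxminus (Vf x0) (Vf x0) := Set.mem_iInter₂.mp hz _ hγ
      obtain ⟨a, ha, b, hb, hab⟩ := hz2
      rw [← hx0] at hzO
      obtain ⟨c, hc, hcz⟩ := hzO
      exact hVsep x0 a ha b hb c hc (hab.trans hcz.symm)
    · have hO : O = interior U := by
        rcases hDC hOD with h | h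
        · exact h
        · exact absurd ⟨_, h.choose_spec⟩ hex
      exact hzU (interior_subset (hO ▸ hzO))
end

section
/- For every T₁ paratopological gyrogroup G, wHs(G) ≤ l(G), the Lindelöf number of G. -/
open Pointwise

/-- The weakly Hausdorff number: the minimum cardinal κ such that every neighborhood U of 0
admits a family γ of neighborhoods of 0 with |γ| ≤ κ and ⋂_{V∈γ}(⊖V) ⊆ U. -/
noncomputable def wHs (G : Type*) [Zero G] [Neg G] [TopologicalSpace G] : Cardinal :=
  sInf {κ : Cardinal | ∀ U ∈ nhds (0 : G), ∃ γ : Set (Set G),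
    (∀ V ∈ γ, V ∈ nhds (0 : G)) ∧ Cardinal.mk γ ≤ κ ∧ (⋂ V ∈ γ, -V) ⊆ U}

/-- For every T₁ paratopological gyrogroup G, wHs(G) ≤ l(G). -/
theorem wHs_le_lindelofNumber {G : Type*} [Gyrogroup G] [TopologicalSpace G]
    [ContinuousAdd G] [T1Space G] : wHs G ≤ LindelofNumber G := by

  have hL : LindelofNumber G ∈ {κ : Cardinal | Cardinal.aleph0 ≤ κ ∧
      ∀ C : Set (Set G), (∀ U ∈ C, IsOpen U) → ⋃₀ C = Set.univ →
        ∃ D ⊆ C, Cardinal.mk D ≤ κ ∧ ⋃₀ D = Set.univ} := by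
    apply csInf_mem
    refine ⟨max Cardinal.aleph0 (2 ^ Cardinal.mk G), le_max_left _ _, ?_⟩
    intro C _ hC
    refine ⟨C, subset_rfl, le_max_of_le_right ?_, hC⟩
    simpa [Cardinal.mk_set] using Cardinal.mk_set_le C
  obtain ⟨hκ0, hκ⟩ := hL
  apply csInf_le'
  intro U hU
  -- key separation lemma from T₁ + continuity of addition
  have key : ∀ x : G, x ≠ 0 → ∃ O W : Set G, IsOpen O ∧ x ∈ O ∧ W ∈ nhds (0 : G) ∧
      ∀ y ∈ O, ∀ w ∈ W, w + y ≠ 0 := by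
    intro x hx
    have hcont : Continuous fun p : G × G => p.2 + p.1 :=
      continuous_snd.add continuous_fst
    have hopen : IsOpen {p : G × G | p.2 + p.1 ≠ (0 : G)} :=
      (isOpen_compl_singleton (x := (0 : G))).preimage hcont
    have hmem : (x, (0 : G)) ∈ {p : G × G | p.2 + p.1 ≠ (0 : G)} := by
      simpa [Gyrogroup.zero_add] using hx
    obtain ⟨u, v, hu, hv, hxu, h0v, huv⟩ := isOpen_prod_iff.mp hopen x 0 hmem
    refine ⟨u, v, hu, hxu, hv.mem_nhds h0v, ?_⟩
    intro y hy w hw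
    exact huv (Set.mk_mem_prod hy hw)
  choose! O W hOopen hxO hWnhds hsep using key
  -- build an open cover
  set C : Set (Set G) := insert (interior U) (O '' {x : G | x ≠ 0}) with hCdef
  have hCopen : ∀ S ∈ C, IsOpen S := by
    rintro S (rfl | ⟨x, hx, rfl⟩)
    · exact isOpen_interior
    · exact hOopen x hx
  have hCcov : ⋃₀ C = Set.univ := by
    apply Set.eq_univ_of_forall
    intro z
    by_cases hz : z = 0
    · exact ⟨interior U, Set.mem_insert _ _, by
        subst hz; exact mem_interior_iff_mem_nhds.mpr hU⟩
    · exact ⟨O z, Set.mem_insert_of_mem _ ⟨z, hz, rfl⟩, hxO z hz⟩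
  obtain ⟨D, hDC, hDcard, hDcov⟩ := hκ C hCopen hCcov
  classical
  -- associated family of neighborhoods of 0
  set g : Set G → Set G := fun S =>
    if h : ∃ x : G, x ≠ 0 ∧ S = O x then W h.choose else Set.univ with hgdef
  refine ⟨g '' D, ?_, ?_, ?_⟩
  · rintro V ⟨S, _, rfl⟩
    by_cases h : ∃ x : G, x ≠ 0 ∧ S = O x
    · simpa [hgdef, h] using hWnhds h.choose h.choose_spec.1
    · simp only [hgdef]; rw [dif_neg h]; exact Filter.univ_mem
  · exact (Cardinal.mk_image_le).trans hDcard
  · intro z hz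
    by_contra hzU
    have hzD : z ∈ ⋃₀ D := hDcov ▸ Set.mem_univ z
    obtain ⟨S, hSD, hzS⟩ := hzD
    rcases hDC hSD with (rfl | ⟨x, hx, rfl⟩)
    · exact hzU (interior_subset hzS)
    · have h : ∃ x' : G, x' ≠ 0 ∧ O x = O x' := ⟨x, hx, rfl⟩
      have hgS : g (O x) = W h.choose := by simp [hgdef, h]
      have hzneg : z ∈ -(g (O x)) := by
        have := Set.mem_iInter₂.mp hz (g (O x)) ⟨O x, hSD, rfl⟩
        exact this
      rw [hgS] at hzneg
      have hnz : -z ∈ W h.choose := Set.mem_neg.mp hzneg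
      have hzO : z ∈ O h.choose := h.choose_spec.2 ▸ hzS
      exact hsep h.choose h.choose_spec.1 z hzO (-z) hnz (Gyrogroup.neg_add_cancel z)
end

section
/- Every subgyrogroup of an ω-balanced paratopological gyrogroup is ω-balanced. -/
open Pointwise

/-- A family γ of neighborhoods of 0 is subordinated to U if for all x, y there are
members V₁, V₂ of γ with ⊖(x⊕y)⊕((V₁⊕x)⊕y) ⊆ U and V₂ ⊆ ⊖(x⊕y)⊕((U⊕x)⊕y). -/
def Subordinated {G : Type*} [Add G] [Neg G] (γ : Set (Set G)) (U : Set G) : Prop :=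
  (∀ x y : G, ∃ V ∈ γ, {-(x + y)} + ((V + {x}) + {y}) ⊆ U) ∧
  (∀ x y : G, ∃ V ∈ γ, V ⊆ {-(x + y)} + ((U + {x}) + {y}))

/-- A paratopological gyrogroup is ω-balanced if every neighborhood of the identity
has a countable subordinated family of open neighborhoods of the identity. -/
def OmegaBalanced (G : Type*) [Add G] [Neg G] [Zero G] [TopologicalSpace G] : Prop :=
  ∀ U ∈ nhds (0 : G), ∃ γ : Set (Set G), γ.Countable ∧
    (∀ V ∈ γ, IsOpen V ∧ (0 : G) ∈ V) ∧ Subordinated γ U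

instance {G : Type*} [Gyrogroup G] (K : Subgyrogroup G) : Zero K.carrier :=
  ⟨⟨0, K.zero_mem⟩⟩

instance {G : Type*} [Gyrogroup G] (K : Subgyrogroup G) : Add K.carrier :=
  ⟨fun a b => ⟨a.1 + b.1, K.add_mem a.2 b.2⟩⟩

instance {G : Type*} [Gyrogroup G] (K : Subgyrogroup G) : Neg K.carrier :=
  ⟨fun a => ⟨-a.1, K.neg_mem a.2⟩⟩

section GyroLemmas

variable {G : Type*} [Gyrogroup G]

open Gyrogroup

private lemma gyr_aux (a x : G) : -a + (a + x) = gyr (-a) a x := by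
  rw [gyrassoc, Gyrogroup.neg_add_cancel, Gyrogroup.zero_add]

private lemma gyro_add_left_cancel {a x y : G} (h : a + x = a + y) : x = y := by
  have h2 : -a + (a + x) = -a + (a + y) := by rw [h]
  rw [gyr_aux, gyr_aux] at h2
  exact (gyr_bijective (-a) a).1 h2

private lemma gyr_zero_left (b c : G) : gyr (0 : G) b c = c := by
  have h := gyrassoc (0 : G) b c
  rw [Gyrogroup.zero_add, Gyrogroup.zero_add] at h
  exact (gyro_add_left_cancel h).symm

private lemma gyr_neg_self (a c : G) : gyr (-a) a c = c := by
  have h := loop (-a) a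
  rw [Gyrogroup.neg_add_cancel] at h
  rw [← h, gyr_zero_left]

private lemma gyr_self_neg (a c : G) : gyr a (-a) c = c := by
  have h := loop a (-a)
  rw [Gyrogroup.add_neg_cancel] at h
  rw [← h, gyr_zero_left]

private lemma gyro_add_neg_add (a b : G) : a + (-a + b) = b := by
  rw [gyrassoc, Gyrogroup.add_neg_cancel, Gyrogroup.zero_add, gyr_self_neg]

private lemma gyro_right_cancel (a b : G) : (a + b) + gyr a b (-b) = a := by
  rw [← gyrassoc, Gyrogroup.add_neg_cancel, Gyrogroup.add_zero]

private lemma mem_of_translate {K : Subgyrogroup G} {x y w : G}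
    (hx : x ∈ K.carrier) (hy : y ∈ K.carrier)
    (hv : -(x + y) + ((w + x) + y) ∈ K.carrier) : w ∈ K.carrier := by
  have hc : (w + x) + y ∈ K.carrier := by
    have h : (x + y) + (-(x + y) + ((w + x) + y)) = (w + x) + y := gyro_add_neg_add _ _
    rw [← h]
    exact K.add_mem (K.add_mem hx hy) hv
  have hd : w + x ∈ K.carrier := by
    have h1 : gyr ((w + x) + y) y (-y) ∈ K.carrier := by
      rw [← K.gyr_image hc hy]
      exact ⟨-y, K.neg_mem hy, rfl⟩
    have h2 : ((w + x) + y) + gyr ((w + x) + y) y (-y) = w + x := by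
      rw [loop]
      exact gyro_right_cancel (w + x) y
    rw [← h2]
    exact K.add_mem hc h1
  have h1 : gyr (w + x) x (-x) ∈ K.carrier := by
    rw [← K.gyr_image hd hx]
    exact ⟨-x, K.neg_mem hx, rfl⟩
  have h2 : (w + x) + gyr (w + x) x (-x) = w := by
    rw [loop]
    exact gyro_right_cancel w x
  rw [← h2]
  exact K.add_mem hd h1

end GyroLemmas

/-- Every subgyrogroup of an ω-balanced paratopological gyrogroup is ω-balanced. -/
theorem omegaBalanced_subgyrogroup {G : Type*} [Gyrogroup G] [TopologicalSpace G]
    [ContinuousAdd G] (hG : OmegaBalanced G) (K : Subgyrogroup G) :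
    OmegaBalanced K.carrier := by
  intro U hU
  rw [mem_nhds_subtype] at hU
  obtain ⟨W, hW, hWU⟩ := hU
  have hW0 : W ∈ nhds (0 : G) := hW
  obtain ⟨γ, hγc, hγo, hγ1, hγ2⟩ := hG W hW0
  refine ⟨(fun V => (Subtype.val ⁻¹' V : Set K.carrier)) '' γ, hγc.image _, ?_, ?_, ?_⟩
  · rintro V' ⟨V, hV, rfl⟩
    exact ⟨(hγo V hV).1.preimage continuous_subtype_val, (hγo V hV).2⟩
  · intro x y
    obtain ⟨V, hV, hsub⟩ := hγ1 x.1 y.1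
    refine ⟨_, ⟨V, hV, rfl⟩, ?_⟩
    intro z hz
    simp only [Set.mem_add, Set.mem_singleton_iff, Set.mem_preimage] at hz
    obtain ⟨a, ha, b, ⟨c, ⟨v, hv, d, hd, rfl⟩, e, he, rfl⟩, hzz⟩ := hz
    apply hWU
    show z.1 ∈ W
    apply hsub
    refine ⟨a.1, ?_, ((v + d) + e).1, ⟨(v + d).1, ⟨v.1, hv, d.1, ?_, rfl⟩, e.1, ?_, rfl⟩, ?_⟩
    · rw [ha]; rfl
    · exact congrArg Subtype.val hd
    · exact congrArg Subtype.val he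
    · exact congrArg Subtype.val hzz
  · intro x y
    obtain ⟨V, hV, hsub⟩ := hγ2 x.1 y.1
    refine ⟨_, ⟨V, hV, rfl⟩, ?_⟩
    intro z hz
    have hz1 : (z.1 : G) ∈ {-(x.1 + y.1)} + ((W + {x.1}) + {y.1}) := hsub hz
    simp only [Set.mem_add, Set.mem_singleton_iff] at hz1
    obtain ⟨a, rfl, b, ⟨c, ⟨w, hw, d, rfl, rfl⟩, e, rfl, rfl⟩, hzeq⟩ := hz1
    have hwK : w ∈ K.carrier := by
      apply mem_of_translate x.2 y.2
      rw [hzeq]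
      exact z.2
    refine ⟨-(x + y), rfl, _, ⟨_, ⟨⟨w, hwK⟩, hWU hw, x, rfl, rfl⟩, y, rfl, rfl⟩, ?_⟩
    apply Subtype.ext
    exact hzeq
end

section
/- The topological product of a family of ω-balanced paratopological gyrogroups is ω-balanced. -/
open Pointwise

namespace GyroAux
open Gyrogroup
variable {G : Type*} [Gyrogroup G]

lemma add_left_cancel' {a u v : G} (h : a + u = a + v) : u = v := by
  have h2 : -a + (a + u) = -a + (a + v) := congrArg (-a + ·) h
  rw [gyrassoc (-a) a u, gyrassoc (-a) a v, Gyrogroup.neg_add_cancel, Gyrogroup.zero_add,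
    Gyrogroup.zero_add] at h2
  exact (gyr_bijective (-a) a).1 h2

lemma neg_add_cancel_left (a b : G) : -a + (a + b) = b := by
  rw [gyrassoc (-a) a b, Gyrogroup.neg_add_cancel, Gyrogroup.zero_add, gyr_neg_self]

lemma gyr_inv_I (a b x : G) : gyr (-a) (a + b) (gyr a b x) = x := by
  have h1 : b + x = -a + (a + (b + x)) := (neg_add_cancel_left _ _).symm
  rw [gyrassoc a b x, gyrassoc (-a) (a + b) _, neg_add_cancel_left] at h1
  exact (add_left_cancel' h1).symm

lemma gyr_right_loop_cancel (a b c : G) : gyr a (b + a) (gyr b a c) = c := by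
  have h := loop (-b) (b + a)
  rw [neg_add_cancel_left] at h
  rw [h]
  exact gyr_inv_I b a c

lemma exists_add_right (p q : G) : ∃ x : G, x + p = q := by
  refine ⟨-p + ((p + q) + -p), ?_⟩
  have key : -p + ((p + q) + (-p + p)) = (-p + ((p + q) + -p)) + p := by
    rw [gyrassoc (p + q) (-p) p, gyrassoc (-p) ((p + q) + -p) _, gyr_right_loop_cancel]
  rw [Gyrogroup.neg_add_cancel, Gyrogroup.add_zero, neg_add_cancel_left] at key
  exact key.symm

lemma exists_conj (a b c : G) : ∃ u : G, -(a + b) + ((u + a) + b) = c := by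
  obtain ⟨w, hw⟩ := exists_add_right b ((a + b) + c)
  obtain ⟨u, hu⟩ := exists_add_right a w
  exact ⟨u, by rw [hu, hw, neg_add_cancel_left]⟩

lemma mem_magic {H : Type*} [Add H] [Neg H] {V : Set H} {x y z : H} :
    z ∈ ({-(x + y)} : Set H) + ((V + {x}) + {y}) ↔
      ∃ v ∈ V, z = -(x + y) + ((v + x) + y) := by
  simp only [Set.singleton_add, Set.add_singleton, Set.image_image, Set.mem_image]
  constructor
  · rintro ⟨v, hv, rfl⟩; exact ⟨v, hv, rfl⟩
  · rintro ⟨v, hv, rfl⟩; exact ⟨v, hv, rfl⟩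

end GyroAux

/-- The topological product of a family of ω-balanced paratopological gyrogroups is
ω-balanced. -/
theorem omegaBalanced_pi {ι : Type*} {G : ι → Type*} [∀ i, Gyrogroup (G i)]
    [∀ i, TopologicalSpace (G i)] [∀ i, ContinuousAdd (G i)]
    (h : ∀ i, OmegaBalanced (G i)) : OmegaBalanced (∀ i, G i) := by
  classical
  intro U hU
  rw [nhds_pi, Filter.mem_pi] at hU
  obtain ⟨I, hIfin, t, ht, htU⟩ := hU
  have ht' : ∀ i, t i ∈ nhds (0 : G i) := ht
  choose γ' hγc hγopen hγsub using fun i => h i (t i) (ht' i)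
  haveI : Finite ↥I := hIfin.to_subtype
  haveI : ∀ i, Countable {W : Set (G i) // W ∈ γ' i} := fun i => (hγc i).to_subtype
  set mk : (∀ i : I, {W : Set (G i) // W ∈ γ' i}) → Set (∀ i, G i) :=
    fun V => Set.pi I (fun i => if hi : i ∈ I then (V ⟨i, hi⟩ : Set (G i)) else Set.univ)
    with hmk
  refine ⟨Set.range mk, Set.countable_range mk, ?_, ?_, ?_⟩
  · rintro W ⟨V, rfl⟩
    constructor
    · refine isOpen_set_pi hIfin (fun i hi => ?_)
      rw [dif_pos hi]
      exact (hγopen i _ (V ⟨i, hi⟩).2).1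
    · refine Set.mem_pi.2 (fun i hi => ?_)
      rw [dif_pos hi]
      exact (hγopen i _ (V ⟨i, hi⟩).2).2
  · -- first subordination condition
    intro x y
    choose Vc hVmem hVsub using fun i => (hγsub i).1 (x i) (y i)
    have hmem : mk (fun i => ⟨Vc i, hVmem i⟩) ∈ Set.range mk :=
      ⟨fun i => ⟨Vc i, hVmem i⟩, rfl⟩
    refine ⟨mk (fun i => ⟨Vc i, hVmem i⟩), hmem, ?_⟩
    intro z hz
    obtain ⟨w, hw, rfl⟩ := GyroAux.mem_magic.1 hz
    refine htU (Set.mem_pi.2 fun i hi => ?_)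
    refine hVsub i (GyroAux.mem_magic.2 ⟨w i, ?_, rfl⟩)
    have := Set.mem_pi.1 hw i hi
    rwa [dif_pos hi] at this
  · -- second subordination condition
    intro x y
    choose Vc hVmem hVsub using fun i => (hγsub i).2 (x i) (y i)
    have hmem : mk (fun i => ⟨Vc i, hVmem i⟩) ∈ Set.range mk :=
      ⟨fun i => ⟨Vc i, hVmem i⟩, rfl⟩
    refine ⟨mk (fun i => ⟨Vc i, hVmem i⟩), hmem, ?_⟩
    intro v hv
    have key : ∀ i, ∃ u : G i, (i ∈ I → u ∈ t i) ∧
        -(x i + y i) + ((u + x i) + y i) = v i := by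
      intro i
      by_cases hi : i ∈ I
      · have hvi : v i ∈ Vc i := by
          have := Set.mem_pi.1 hv i hi
          rwa [dif_pos hi] at this
        obtain ⟨u, hu, heq⟩ := GyroAux.mem_magic.1 (hVsub i hvi)
        exact ⟨u, fun _ => hu, heq.symm⟩
      · obtain ⟨u, hu⟩ := GyroAux.exists_conj (x i) (y i) (v i)
        exact ⟨u, fun hh => absurd hh hi, hu⟩
    choose u hu1 hu2 using key
    refine GyroAux.mem_magic.2 ⟨u, htU (Set.mem_pi.2 fun i hi => hu1 i hi), ?_⟩
    funext i
    exact (hu2 i).symm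
end

section
/- In every strongly paratopological gyrogroup G, there exists a local base at the identity consisting of ω-good sets; i.e., for every neighborhood U of 0 there is an open set V with 0 ∈ V ⊆ U and a countable family γ of open neighborhoods of 0 such that for each x ∈ V there exists W ∈ γ with x⊕W ⊆ V. -/
open Pointwise

namespace GyroAux

open Gyrogroup

variable {G : Type*} [Gyrogroup G]

lemma neg_add_eq_gyr (a c : G) : -a + (a + c) = gyr (-a) a c := by
  rw [Gyrogroup.gyrassoc, Gyrogroup.neg_add_cancel, Gyrogroup.zero_add]

lemma add_left_injective (a : G) : Function.Injective (fun c : G => a + c) := by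
  have h : (fun c : G => -a + (a + c)) = gyr (-a) a := by
    funext c; exact neg_add_eq_gyr a c
  have hinj : Function.Injective (fun c : G => -a + (a + c)) := by
    rw [h]; exact (gyr_bijective (-a) a).injective
  exact Function.Injective.of_comp (f := fun c : G => -a + c) hinj

lemma add_neg_cancel_left (a b : G) : a + (-a + b) = b := by
  rw [Gyrogroup.gyrassoc, Gyrogroup.add_neg_cancel, Gyrogroup.zero_add]
  have h := loop a (-a)
  rw [Gyrogroup.add_neg_cancel] at h
  rw [← h, gyr_zero_left]

/-- Key lemma: if `W` is gyr-invariant then set addition associates accross it. -/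
lemma add_add_assoc {A U W : Set G} (hW : ∀ a b : G, gyr a b '' W = W) :
    (A + U) + W = A + (U + W) := by
  ext x
  simp only [Set.mem_add]
  constructor
  · rintro ⟨y, ⟨a, ha, u, hu, rfl⟩, w, hw, rfl⟩
    have hw' : w ∈ gyr a u '' W := by rw [hW a u]; exact hw
    obtain ⟨w', hw', rfl⟩ := hw'
    exact ⟨a, ha, u + w', ⟨u, hu, w', hw', rfl⟩, gyrassoc a u w'⟩
  · rintro ⟨a, ha, z, ⟨u, hu, w, hw, rfl⟩, rfl⟩
    refine ⟨a + u, ⟨a, ha, u, hu, rfl⟩, gyr a u w, ?_, (gyrassoc a u w).symm⟩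
    rw [← hW a u]; exact ⟨w, hw, rfl⟩

lemma isOpen_add_left [TopologicalSpace G] [ContinuousAdd G] {A O : Set G}
    (hO : IsOpen O) : IsOpen (A + O) := by
  have hEq : A + O = ⋃ a ∈ A, (fun x : G => -a + x) ⁻¹' O := by
    ext x
    simp only [Set.mem_add, Set.mem_iUnion, Set.mem_preimage]
    constructor
    · rintro ⟨a, ha, o, ho, rfl⟩
      exact ⟨a, ha, by rwa [neg_add_cancel_left]⟩
    · rintro ⟨a, ha, h⟩
      exact ⟨a, ha, -a + x, h, add_neg_cancel_left a x⟩
  rw [hEq]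
  exact isOpen_biUnion fun a _ => hO.preimage (continuous_const.add continuous_id)

end GyroAux

/-- In a strongly paratopological gyrogroup (with gyr-invariant neighborhood base 𝒰 at 0),
there is a local base at the identity of ω-good sets: every neighborhood U of 0 contains
an open set V ∋ 0 admitting a countable family γ of open neighborhoods of 0 such that
for each x ∈ V some W ∈ γ satisfies x⊕W ⊆ V. -/
theorem exists_omegaGood_base {G : Type*} [Gyrogroup G] [TopologicalSpace G]
    [ContinuousAdd G] (𝒰 : Set (Set G))
    (hopen : ∀ U ∈ 𝒰, IsOpen U)
    (hb : (nhds (0 : G)).HasBasis (· ∈ 𝒰) id)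
    (hgyr : ∀ U ∈ 𝒰, ∀ x y : G, Gyrogroup.gyr x y '' U = U) :
    ∀ U ∈ nhds (0 : G), ∃ V : Set G, IsOpen V ∧ (0 : G) ∈ V ∧ V ⊆ U ∧
      ∃ γ : Set (Set G), γ.Countable ∧ (∀ W ∈ γ, IsOpen W ∧ (0 : G) ∈ W) ∧
        ∀ x ∈ V, ∃ W ∈ γ, {x} + W ⊆ V := by
  intro U hU
  -- Step: every basic neighborhood contains B with B + B ⊆ A
  have hstep : ∀ A ∈ 𝒰, ∃ B ∈ 𝒰, B + B ⊆ A := by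
    intro A hA
    have hA0 : A ∈ nhds (0 : G) := hb.mem_of_mem hA
    have hcont : Filter.Tendsto (fun p : G × G => p.1 + p.2)
        (nhds (0 : G) ×ˢ nhds (0 : G)) (nhds (0 : G)) := by
      have h := continuous_add.tendsto ((0 : G), (0 : G))
      rw [nhds_prod_eq] at h
      simpa [Gyrogroup.zero_add] using h
    have hpre : (fun p : G × G => p.1 + p.2) ⁻¹' A ∈ nhds (0 : G) ×ˢ nhds (0 : G) :=
      hcont hA0
    obtain ⟨s, hs, t, ht, hst⟩ := Filter.mem_prod_iff.mp hpre
    have hstmem : s ∩ t ∈ nhds (0 : G) := Filter.inter_mem hs ht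
    obtain ⟨B, hB, hBsub⟩ := hb.mem_iff.mp hstmem
    refine ⟨B, hB, ?_⟩
    rintro x ⟨b₁, hb₁, b₂, hb₂, rfl⟩
    exact hst (Set.mk_mem_prod (hBsub hb₁).1 (hBsub hb₂).2)
  choose! f hf1 hf2 using hstep
  obtain ⟨U₀, hU₀, hU₀sub⟩ := hb.mem_iff.mp hU
  set seq : ℕ → Set G := fun n => f^[n] U₀ with hseqdef
  have hseqmem : ∀ n, seq n ∈ 𝒰 := by
    intro n
    induction n with
    | zero => exact hU₀
    | succ n ih =>
      show f^[n+1] U₀ ∈ 𝒰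
      rw [Function.iterate_succ_apply']
      exact hf1 _ ih
  have hseqsub : ∀ n, seq (n + 1) + seq (n + 1) ⊆ seq n := by
    intro n
    have h : seq (n + 1) = f (seq n) := Function.iterate_succ_apply' f n U₀
    rw [h]
    exact hf2 _ (hseqmem n)
  have hseq0 : ∀ n, (0 : G) ∈ seq n := fun n =>
    mem_of_mem_nhds (hb.mem_of_mem (hseqmem n))
  have hseqopen : ∀ n, IsOpen (seq n) := fun n => hopen _ (hseqmem n)
  have hseqgyr : ∀ n, ∀ a b : G, Gyrogroup.gyr a b '' seq n = seq n := fun n =>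
    hgyr _ (hseqmem n)
  -- the increasing tower
  set Vs : ℕ → Set G := fun n => Nat.rec (seq 1) (fun k Vk => Vk + seq (k + 2)) n
    with hVsdef
  have hVs0 : Vs 0 = seq 1 := rfl
  have hVsS : ∀ n, Vs (n + 1) = Vs n + seq (n + 2) := fun n => rfl
  have hbound : ∀ n, Vs n + seq (n + 1) ⊆ seq 0 := by
    intro n
    induction n with
    | zero => exact hseqsub 0
    | succ n ih =>
      rw [hVsS n, GyroAux.add_add_assoc (hseqgyr (n + 2))]
      refine subset_trans ?_ ih
      exact Set.add_subset_add_left (hseqsub (n + 1))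
  have hVsopen : ∀ n, IsOpen (Vs n) := by
    intro n
    induction n with
    | zero => exact hseqopen 1
    | succ n ih =>
      rw [hVsS n]
      exact GyroAux.isOpen_add_left (hseqopen (n + 2))
  have hVs0mem : ∀ n, (0 : G) ∈ Vs n := by
    intro n
    induction n with
    | zero => exact hseq0 1
    | succ n ih =>
      rw [hVsS n]
      exact ⟨0, ih, 0, hseq0 (n + 2), Gyrogroup.zero_add 0⟩
  refine ⟨⋃ n, Vs n, isOpen_iUnion hVsopen, Set.mem_iUnion.mpr ⟨0, hVs0mem 0⟩, ?_, ?_⟩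
  · -- V ⊆ U
    intro x hx
    obtain ⟨n, hn⟩ := Set.mem_iUnion.mp hx
    have : x ∈ Vs n + seq (n + 1) :=
      ⟨x, hn, 0, hseq0 (n + 1), Gyrogroup.add_zero x⟩
    exact hU₀sub (hbound n this)
  · refine ⟨Set.range seq, Set.countable_range seq, ?_, ?_⟩
    · rintro W ⟨n, rfl⟩
      exact ⟨hseqopen n, hseq0 n⟩
    · intro x hx
      obtain ⟨n, hn⟩ := Set.mem_iUnion.mp hx
      refine ⟨seq (n + 2), ⟨n + 2, rfl⟩, ?_⟩
      have h1 : {x} + seq (n + 2) ⊆ Vs n + seq (n + 2) :=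
        Set.add_subset_add_right (Set.singleton_subset_iff.mpr hn)
      rw [← hVsS n] at h1
      exact h1.trans (Set.subset_iUnion Vs (n + 1))
end

section
/- Every topologically periodic paratopological gyrogroup G satisfies wHs(G) ≤ ω. -/
open Pointwise

/-- Natural multiples in a gyrogroup: 0·a = 0 and (n+1)·a = a ⊕ (n·a). -/
def gyroNsmul {G : Type*} [Gyrogroup G] : ℕ → G → G
  | 0, _ => 0
  | n + 1, a => a + gyroNsmul n a

section GyroAlgebra

variable {G : Type*} [Gyrogroup G]

lemma gyro_left_cancel {a b c : G} (h : a + b = a + c) : b = c := by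
  have h1 : ∀ x : G, -a + (a + x) = Gyrogroup.gyr (-a) a x := fun x => by
    rw [Gyrogroup.gyrassoc, Gyrogroup.neg_add_cancel, Gyrogroup.zero_add]
  have h2 : Gyrogroup.gyr (-a) a b = Gyrogroup.gyr (-a) a c := by
    rw [← h1, ← h1, h]
  exact (Gyrogroup.gyr_bijective (-a) a).1 h2

lemma gyro_gyr_zero_left (a c : G) : Gyrogroup.gyr (0 : G) a c = c := by
  have h := Gyrogroup.gyrassoc (0 : G) a c
  rw [Gyrogroup.zero_add, Gyrogroup.zero_add] at h
  exact (gyro_left_cancel h).symm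

lemma gyro_gyr_neg_add (a c : G) : Gyrogroup.gyr (-a) a c = c := by
  have h := Gyrogroup.loop (-a) a
  rw [Gyrogroup.neg_add_cancel] at h
  rw [← h]
  exact gyro_gyr_zero_left a c

lemma gyro_neg_add_cancel_left (a c : G) : -a + (a + c) = c := by
  rw [Gyrogroup.gyrassoc, Gyrogroup.neg_add_cancel, Gyrogroup.zero_add, gyro_gyr_neg_add]

lemma gyro_neg_neg (a : G) : -(-a) = a := by
  have h : -a + -(-a) = -a + a := by
    rw [Gyrogroup.add_neg_cancel, Gyrogroup.neg_add_cancel]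
  exact gyro_left_cancel h

lemma gyro_add_neg_cancel_left (a c : G) : a + (-a + c) = c := by
  have h := gyro_neg_add_cancel_left (-a) c
  rw [gyro_neg_neg] at h
  exact h

/-- The pointwise form of the "left loop" identity on left translations. -/
lemma gyro_phi (a b g : G) : ((a + b) + b) + g = (a + b) + (-a + ((a + b) + g)) := by
  obtain ⟨c, hc⟩ := (Gyrogroup.gyr_bijective a b).2 g
  subst hc
  have h1 : (a + b) + Gyrogroup.gyr a b c = a + (b + c) := (Gyrogroup.gyrassoc a b c).symm
  have h2 : ((a + b) + b) + Gyrogroup.gyr a b c = (a + b) + (b + c) := by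
    have h := Gyrogroup.gyrassoc (a + b) b c
    rw [Gyrogroup.loop] at h
    exact h.symm
  rw [h2, h1, gyro_neg_add_cancel_left]

/-- Left-nested natural multiples. -/
def gyroLnsmul : ℕ → G → G
  | 0, _ => 0
  | n + 1, a => gyroLnsmul n a + a

lemma gyro_lnsmul_add (k : ℕ) (b c : G) :
    gyroLnsmul (k + 1) b + c = b + (gyroLnsmul k b + c) := by
  induction k generalizing c with
  | zero =>
    show ((0 : G) + b) + c = b + ((0 : G) + c)
    rw [Gyrogroup.zero_add, Gyrogroup.zero_add]
  | succ k ih =>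
    calc gyroLnsmul (k + 1 + 1) b + c
        = (gyroLnsmul k b + b) + (-(gyroLnsmul k b) + ((gyroLnsmul k b + b) + c)) :=
          gyro_phi (gyroLnsmul k b) b c
      _ = b + (gyroLnsmul k b + (-(gyroLnsmul k b) + ((gyroLnsmul k b + b) + c))) := ih _
      _ = b + ((gyroLnsmul k b + b) + c) := by rw [gyro_add_neg_cancel_left]
      _ = b + (gyroLnsmul (k + 1) b + c) := rfl

lemma gyro_rn_eq_ln (k : ℕ) (b : G) : gyroNsmul k b = gyroLnsmul k b := by
  induction k with
  | zero => rfl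
  | succ k ih =>
    show b + gyroNsmul k b = gyroLnsmul (k + 1) b
    rw [ih]
    have h := gyro_lnsmul_add k b 0
    rw [Gyrogroup.add_zero, Gyrogroup.add_zero] at h
    exact h.symm

lemma gyro_ln_add_eq_iter (m : ℕ) (x c : G) :
    gyroLnsmul m x + c = (fun y => x + y)^[m] c := by
  induction m generalizing c with
  | zero =>
    show (0 : G) + c = c
    exact Gyrogroup.zero_add c
  | succ m ih =>
    calc gyroLnsmul (m + 1) x + c = x + (gyroLnsmul m x + c) := gyro_lnsmul_add m x c
      _ = x + ((fun y => x + y)^[m] c) := by rw [ih]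
      _ = (fun y => x + y)^[m + 1] c := (Function.iterate_succ_apply' _ _ _).symm

lemma gyro_iter_cancel (m : ℕ) (x c : G) :
    (fun y => x + y)^[m] ((fun y => -x + y)^[m] c) = c := by
  induction m generalizing c with
  | zero => rfl
  | succ m ih =>
    rw [Function.iterate_succ_apply' (fun y => x + y) m,
      Function.iterate_succ_apply (fun y => -x + y) m, ih]
    show x + (-x + c) = c
    exact gyro_add_neg_cancel_left x c

/-- The key identity: (m+1)·x ⊕ m·(−x) = x. -/
lemma gyro_key (m : ℕ) (x : G) : gyroNsmul (m + 1) x + gyroNsmul m (-x) = x := by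
  rw [gyro_rn_eq_ln, gyro_rn_eq_ln]
  have h1 := gyro_ln_add_eq_iter m (-x) 0
  rw [Gyrogroup.add_zero] at h1
  rw [h1, gyro_ln_add_eq_iter (m + 1) x ((fun y => -x + y)^[m] 0)]
  rw [Function.iterate_succ_apply' (fun y => x + y) m, gyro_iter_cancel]
  show x + 0 = x
  exact Gyrogroup.add_zero x

end GyroAlgebra

lemma gyro_half_nhds {G : Type*} [Gyrogroup G] [TopologicalSpace G] [ContinuousAdd G]
    (W : Set G) (hW : W ∈ nhds (0 : G)) :
    ∃ V, V ∈ nhds (0 : G) ∧ ∀ a ∈ V, ∀ b ∈ V, a + b ∈ W := by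
  have hc : Filter.Tendsto (fun p : G × G => p.1 + p.2)
      (nhds ((0 : G), (0 : G))) (nhds ((0 : G) + 0)) :=
    continuous_add.tendsto ((0 : G), (0 : G))
  rw [Gyrogroup.add_zero] at hc
  have h2 : (fun p : G × G => p.1 + p.2) ⁻¹' W ∈ nhds (((0 : G), (0 : G))) :=
    hc hW
  obtain ⟨V1, hV1, V2, hV2, hV⟩ := mem_nhds_prod_iff.mp h2
  refine ⟨V1 ∩ V2, Filter.inter_mem hV1 hV2, ?_⟩
  intro a ha b hb
  exact hV (Set.mk_mem_prod ha.1 hb.2)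

/-- Every topologically periodic paratopological gyrogroup satisfies wHs(G) ≤ ω. -/
theorem wHs_le_aleph0_of_topPeriodic {G : Type*} [Gyrogroup G] [TopologicalSpace G]
    [ContinuousAdd G]
    (hper : ∀ x : G, ∀ U ∈ nhds (0 : G), ∃ n : ℕ, 0 < n ∧ gyroNsmul n x ∈ U) :
    wHs G ≤ Cardinal.aleph0 := by
  apply csInf_le'
  show ∀ U ∈ nhds (0 : G), ∃ γ : Set (Set G),
    (∀ V ∈ γ, V ∈ nhds (0 : G)) ∧ Cardinal.mk γ ≤ Cardinal.aleph0 ∧ (⋂ V ∈ γ, -V) ⊆ U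
  intro U hU
  choose nxt hnm hns using fun (W : Set G) (hW : W ∈ nhds (0 : G)) =>
    gyro_half_nhds W hW
  let F : ℕ → {V : Set G // V ∈ nhds (0 : G)} := fun n =>
    Nat.rec ⟨U, hU⟩ (fun _ p => ⟨nxt p.1 p.2, hnm p.1 p.2⟩) n
  have hF0 : (F 0).1 = U := rfl
  have hFs : ∀ n, ∀ a ∈ (F (n + 1)).1, ∀ b ∈ (F (n + 1)).1, a + b ∈ (F n).1 :=
    fun n => hns (F n).1 (F n).2
  refine ⟨Set.range (fun n => (F n).1), ?_, ?_, ?_⟩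
  · rintro V ⟨n, rfl⟩
    exact (F n).2
  · exact Cardinal.mk_le_aleph0_iff.mpr (Set.countable_range _).to_subtype
  · intro x hx
    have hmem : ∀ n, -x ∈ (F n).1 := by
      intro n
      have hxn : x ∈ -(F n).1 := Set.mem_iInter₂.mp hx (F n).1 ⟨n, rfl⟩
      exact Set.mem_neg.mp hxn
    have hpow : ∀ m, ∀ k, gyroNsmul m (-x) ∈ (F k).1 := by
      intro m
      induction m with
      | zero => exact fun k => mem_of_mem_nhds (F k).2
      | succ m ih => exact fun k => hFs k _ (hmem (k + 1)) _ (ih (k + 1))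
    obtain ⟨m, hm, hmx⟩ := hper x (F 1).1 (F 1).2
    obtain ⟨m', rfl⟩ : ∃ m', m = m' + 1 := ⟨m - 1, (Nat.succ_pred_eq_of_pos hm).symm⟩
    have hsum := hFs 0 _ hmx _ (hpow m' 1)
    rw [gyro_key m' x] at hsum
    exact hsum
end
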